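/- arXiv:2304.05317 — 3 statements merged into one kernel-verified Lean document; each statement's English description precedes it below -/
import Mathlib

section
/- Let A be a commutative ring, d ≥ 1, and let φ : A((u)) → A((u)) be a ring endomorphism for which there exist a real number λ > 1 and an integer N ≥ 0 with φ(u^k·A[[u]]) ⊆ u^{⌊λk⌋}·A[[u]] for all integers k > N. Let m ≥ 0 and let n be an integer with n > N and (λ−1)·n > 2m+1. Then for every g ∈ U_n and every x ∈ V_m there exists a unique h ∈ U_n such that g^{-1}·x·φ(g) = h^{-1}·x, where φ is applied to matrices entrywise. -/
noncomputable section

/-- The element `u` of the Laurent series ring `A((u))`. -/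
def uvar (A : Type*) [CommRing A] : LaurentSeries A :=
  HahnSeries.single (1 : ℤ) (1 : A)

/-- `g ∈ U_n`: the matrix `g` satisfies `g − 1 ∈ uⁿ·M_d(A[[u]])`. -/
def MemUn {A : Type*} [CommRing A] {d : ℕ} (n : ℕ)
    (g : Matrix (Fin d) (Fin d) (LaurentSeries A)) : Prop :=
  ∀ i j, ∃ c : PowerSeries A, (g - 1) i j = uvar A ^ n * HahnSeries.ofPowerSeries ℤ A c

/-- `x ∈ V_m`: the matrix `x` is invertible and all entries of `x` and of `x⁻¹` lie in
`u^{-m}·A[[u]]`. -/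
def MemVm {A : Type*} [CommRing A] {d : ℕ} (m : ℕ)
    (x : Matrix (Fin d) (Fin d) (LaurentSeries A)) : Prop :=
  IsUnit x ∧
    (∀ i j, ∃ c : PowerSeries A, uvar A ^ m * x i j = HahnSeries.ofPowerSeries ℤ A c) ∧
    (∀ i j, ∃ c : PowerSeries A, uvar A ^ m * x⁻¹ i j = HahnSeries.ofPowerSeries ℤ A c)

namespace Aux

variable {A : Type*} [CommRing A]

local notation "e" => HahnSeries.ofPowerSeries ℤ A

lemma uvar_eq : uvar A = e PowerSeries.X := (HahnSeries.ofPowerSeries_X).symm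

lemma isUnit_uvar : IsUnit (uvar A) := by
  refine IsUnit.of_mul_eq_one (HahnSeries.single (-1 : ℤ) (1 : A)) ?_
  rw [uvar, HahnSeries.single_mul_single]
  norm_num [HahnSeries.single_zero_one]

lemma upow_mul (k : ℕ) (c : PowerSeries A) :
    uvar A ^ k * e c = e (PowerSeries.X ^ k * c) := by
  rw [uvar_eq, ← map_pow, ← map_mul]

/-- membership in `u^k·A[[u]]` -/
def InU (k : ℕ) (f : LaurentSeries A) : Prop :=
  ∃ c : PowerSeries A, f = uvar A ^ k * e c

lemma InU.zero (k : ℕ) : InU k (0 : LaurentSeries A) := ⟨0, by simp⟩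

lemma InU.add {k : ℕ} {f g : LaurentSeries A} (hf : InU k f) (hg : InU k g) :
    InU k (f + g) := by
  obtain ⟨c, rfl⟩ := hf; obtain ⟨c', rfl⟩ := hg
  exact ⟨c + c', by rw [map_add, mul_add]⟩

lemma InU.neg {k : ℕ} {f : LaurentSeries A} (hf : InU k f) : InU k (-f) := by
  obtain ⟨c, rfl⟩ := hf
  exact ⟨-c, by rw [map_neg]; ring⟩

lemma InU.mul {j k : ℕ} {f g : LaurentSeries A} (hf : InU j f) (hg : InU k g) :
    InU (j + k) (f * g) := by
  obtain ⟨c, rfl⟩ := hf; obtain ⟨c', rfl⟩ := hg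
  exact ⟨c * c', by rw [map_mul, pow_add]; ring⟩

lemma InU.mono {j k : ℕ} (h : j ≤ k) {f : LaurentSeries A} (hf : InU k f) : InU j f := by
  obtain ⟨c, rfl⟩ := hf
  refine ⟨PowerSeries.X ^ (k - j) * c, ?_⟩
  rw [← upow_mul, ← mul_assoc, ← pow_add, Nat.add_sub_cancel' h]

lemma InU.sum {k : ℕ} {ι : Type*} (s : Finset ι) (f : ι → LaurentSeries A)
    (hf : ∀ i ∈ s, InU k (f i)) : InU k (∑ i ∈ s, f i) := by
  classical
  induction s using Finset.induction_on with
  | empty => simpa using InU.zero k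
  | insert _ _ h ih =>
      rw [Finset.sum_insert h]
      exact (hf _ (by simp)).add (ih fun i hi => hf i (by simp [hi]))

lemma InU.cancel {a b : ℕ} {t : LaurentSeries A}
    (h : InU (a + b) (uvar A ^ a * t)) : InU b t := by
  obtain ⟨c, hc⟩ := h
  refine ⟨c, ?_⟩
  have hu : IsUnit (uvar A ^ a) := isUnit_uvar.pow a
  apply hu.mul_left_cancel
  rw [hc, pow_add, mul_assoc]

/-- matrices with all entries in `u^k·A[[u]]` -/
def MatInU {d : ℕ} (k : ℕ) (M : Matrix (Fin d) (Fin d) (LaurentSeries A)) : Prop :=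
  ∀ i j, InU k (M i j)

lemma MatInU.mul {d : ℕ} {j k : ℕ} {M N : Matrix (Fin d) (Fin d) (LaurentSeries A)}
    (hM : MatInU j M) (hN : MatInU k N) : MatInU (j + k) (M * N) := by
  intro i l
  rw [Matrix.mul_apply]
  exact InU.sum _ _ fun a _ => (hM i a).mul (hN a l)

lemma MatInU.one {d : ℕ} : MatInU (A := A) (d := d) 0 1 := by
  intro i j
  by_cases h : i = j
  · exact ⟨1, by simp [Matrix.one_apply, h]⟩
  · exact ⟨0, by simp [Matrix.one_apply, h]⟩

lemma MatInU.add {d : ℕ} {k : ℕ} {M N : Matrix (Fin d) (Fin d) (LaurentSeries A)}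
    (hM : MatInU k M) (hN : MatInU k N) : MatInU k (M + N) :=
  fun i j => by simpa using (hM i j).add (hN i j)

lemma MatInU.neg {d : ℕ} {k : ℕ} {M : Matrix (Fin d) (Fin d) (LaurentSeries A)}
    (hM : MatInU k M) : MatInU k (-M) :=
  fun i j => by simpa using (hM i j).neg

/-- Key invertibility lemma: a matrix `≡ 1 mod uⁿ` (n ≥ 1) is a unit, its inverse
has power series entries, and its inverse is again `≡ 1 mod uⁿ`. -/
lemma key {d : ℕ} {n : ℕ} (hn : 1 ≤ n) {w : Matrix (Fin d) (Fin d) (LaurentSeries A)}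
    (hw : MatInU n (w - 1)) :
    IsUnit w ∧ MatInU 0 w⁻¹ ∧ MatInU n (w⁻¹ - 1) := by
  classical
  choose C hC using hw
  set W : Matrix (Fin d) (Fin d) (PowerSeries A) :=
    1 + Matrix.of (fun i j => PowerSeries.X ^ n * C i j) with hW
  have hwW : w = W.map e := by
    ext i j
    have := hC i j
    rw [Matrix.sub_apply] at this
    have hw1 : w i j = (1 : Matrix (Fin d) (Fin d) (LaurentSeries A)) i j
        + uvar A ^ n * e (C i j) := by rw [← this]; ring
    rw [hw1, Matrix.map_apply, hW, Matrix.add_apply, map_add, upow_mul]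
    congr 1
    by_cases h : i = j <;> simp [Matrix.one_apply, h]
  have hdetW : IsUnit W.det := by
    rw [PowerSeries.isUnit_iff_constantCoeff]
    have : (PowerSeries.constantCoeff (R := A)) W.det
        = (W.map (PowerSeries.constantCoeff (R := A))).det := RingHom.map_det _ _
    have hmap : W.map (PowerSeries.constantCoeff (R := A)) = 1 := by
      ext i j
      rw [Matrix.map_apply, hW, Matrix.add_apply, map_add]
      have : (PowerSeries.constantCoeff (R := A)) (PowerSeries.X ^ n * C i j) = 0 := by
        rw [map_mul, map_pow, PowerSeries.constantCoeff_X, zero_pow (by omega), zero_mul]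
      rw [Matrix.of_apply, this, add_zero]
      by_cases h : i = j <;> simp [Matrix.one_apply, h]
    rw [this, hmap, Matrix.det_one]
    exact isUnit_one
  have hWunit : IsUnit W := (Matrix.isUnit_iff_isUnit_det W).mpr hdetW
  have hwinv : w⁻¹ = W⁻¹.map e := by
    apply Matrix.inv_eq_right_inv
    rw [hwW, ← Matrix.map_mul, Matrix.mul_nonsing_inv _ hdetW]
    ext i j
    by_cases h : i = j <;> simp [Matrix.one_apply, h]
  have hwu : IsUnit w := by
    rw [hwW]
    exact hWunit.map (RingHom.mapMatrix (m := Fin d) (e : PowerSeries A →+* LaurentSeries A))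
  have h0 : MatInU 0 w⁻¹ := by
    intro i j
    exact ⟨W⁻¹ i j, by rw [hwinv, Matrix.map_apply, pow_zero, one_mul]⟩
  refine ⟨hwu, h0, ?_⟩
  have hdet : IsUnit w.det := (Matrix.isUnit_iff_isUnit_det w).mp hwu
  have heq : w⁻¹ - 1 = w⁻¹ * (1 - w) := by
    rw [mul_sub, mul_one, Matrix.nonsing_inv_mul _ hdet]
  rw [heq]
  have : MatInU n (1 - w) := by
    have hw' : MatInU n (w - 1) := fun i j => ⟨C i j, hC i j⟩
    simpa [neg_sub] using MatInU.neg hw'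
  simpa using MatInU.mul h0 this

end Aux

/-- part (1) of Lemma 2.4.2 of the paper.
Let `φ : A((u)) → A((u))` be locally contracting of factor `λ > 1` beyond `N`
(i.e. `φ(u^k·A[[u]]) ⊆ u^{⌊λk⌋}·A[[u]]` for `k > N`).  If `n > N` and `(λ−1)·n > 2m+1`,
then for every `g ∈ U_n` and `x ∈ V_m` there is a unique `h ∈ U_n` with
`g⁻¹·x·φ(g) = h⁻¹·x`. -/
theorem exists_unique_right_twist
    {A : Type*} [CommRing A] {d : ℕ} (hd : 1 ≤ d)
    (φ : LaurentSeries A →+* LaurentSeries A)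
    (lam : ℝ) (hlam : 1 < lam) (N : ℕ)
    (hφ : ∀ k : ℕ, N < k → ∀ f : PowerSeries A,
      ∃ g : PowerSeries A,
        φ (uvar A ^ k * HahnSeries.ofPowerSeries ℤ A f) =
          uvar A ^ ⌊lam * (k : ℝ)⌋₊ * HahnSeries.ofPowerSeries ℤ A g)
    (m n : ℕ) (hnN : N < n) (hn : (2 * (m : ℝ) + 1) < (lam - 1) * (n : ℝ))
    (g : Matrix (Fin d) (Fin d) (LaurentSeries A)) (hg : MemUn n g)
    (x : Matrix (Fin d) (Fin d) (LaurentSeries A)) (hx : MemVm m x) :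
    ∃! h : Matrix (Fin d) (Fin d) (LaurentSeries A),
      MemUn n h ∧ g⁻¹ * x * g.map ⇑φ = h⁻¹ * x := by
  classical
  have hn1 : 1 ≤ n := by omega
  obtain ⟨hxu, hx1, hx2⟩ := hx
  have hxdet : IsUnit x.det := (Matrix.isUnit_iff_isUnit_det x).mp hxu
  have hgmat : Aux.MatInU n (g - 1) := fun i j => hg i j
  obtain ⟨hgu, hginv0, hginvn⟩ := Aux.key hn1 hgmat
  have hfloor : n + 2 * m + 1 ≤ ⌊lam * (n : ℝ)⌋₊ := by
    apply Nat.le_floor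
    push_cast
    nlinarith
  set Δ := (g - 1).map ⇑φ with hΔdef
  have hΔ : Aux.MatInU (n + 2 * m + 1) Δ := by
    intro i j
    obtain ⟨c, hc⟩ := hg i j
    obtain ⟨c', hc'⟩ := hφ n hnN c
    exact Aux.InU.mono hfloor ⟨c', by rw [hΔdef, Matrix.map_apply, hc, hc']⟩
  have hone : ∀ i j : Fin d, φ ((1 : Matrix (Fin d) (Fin d) (LaurentSeries A)) i j)
      = (1 : Matrix (Fin d) (Fin d) (LaurentSeries A)) i j := by
    intro i j
    by_cases h : i = j <;> simp [Matrix.one_apply, h]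
  have hgφ : g.map ⇑φ = 1 + Δ := by
    ext i j
    rw [Matrix.add_apply, hΔdef, Matrix.map_apply, Matrix.map_apply, Matrix.sub_apply,
      map_sub, hone i j]
    ring
  have hz : Aux.MatInU n (x * Δ * x⁻¹) := by
    intro i j
    have hentry : (x * Δ * x⁻¹) i j = ∑ b, ∑ a, x i a * Δ a b * x⁻¹ b j := by
      rw [Matrix.mul_apply]
      refine Finset.sum_congr rfl fun b _ => ?_
      rw [Matrix.mul_apply, Finset.sum_mul]
    rw [hentry]
    refine Aux.InU.sum _ _ fun b _ => Aux.InU.sum _ _ fun a _ => ?_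
    obtain ⟨c1, hc1⟩ := hx1 i a
    obtain ⟨c3, hc3⟩ := hx2 b j
    have h1 : Aux.InU 0 (uvar A ^ m * x i a) := ⟨c1, by rw [pow_zero, one_mul, hc1]⟩
    have h3 : Aux.InU 0 (uvar A ^ m * x⁻¹ b j) := ⟨c3, by rw [pow_zero, one_mul, hc3]⟩
    have h2 : Aux.InU (2 * m + n) (Δ a b) := (hΔ a b).mono (by omega)
    have hmul := (h1.mul h2).mul h3
    refine Aux.InU.cancel (a := 2 * m) ?_
    have heq : uvar A ^ (2 * m) * (x i a * Δ a b * x⁻¹ b j)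
        = uvar A ^ m * x i a * Δ a b * (uvar A ^ m * x⁻¹ b j) := by
      rw [two_mul, pow_add]; ring
    rw [heq]
    simpa using hmul
  set w := g⁻¹ * x * g.map ⇑φ * x⁻¹ with hwdef
  have hxx : x * x⁻¹ = 1 := Matrix.mul_nonsing_inv _ hxdet
  have hw1 : w = g⁻¹ + g⁻¹ * (x * Δ * x⁻¹) := by
    rw [hwdef, hgφ]
    have : g⁻¹ * x * (1 + Δ) * x⁻¹ = g⁻¹ * (x * x⁻¹) + g⁻¹ * (x * Δ * x⁻¹) := by
      noncomm_ring
    rw [this, hxx, mul_one]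
  have hwmat : Aux.MatInU n (w - 1) := by
    have hsplit : w - 1 = (g⁻¹ - 1) + g⁻¹ * (x * Δ * x⁻¹) := by rw [hw1]; abel
    rw [hsplit]
    exact Aux.MatInU.add hginvn (by simpa using Aux.MatInU.mul hginv0 hz)
  obtain ⟨hwu, -, hwinvn⟩ := Aux.key hn1 hwmat
  have hwdet : IsUnit w.det := (Matrix.isUnit_iff_isUnit_det w).mp hwu
  have hww : g⁻¹ * x * g.map ⇑φ = w * x := by
    rw [hwdef, Matrix.mul_assoc _ x⁻¹ x, Matrix.nonsing_inv_mul _ hxdet, mul_one]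
  refine ⟨w⁻¹, ⟨fun i j => hwinvn i j, ?_⟩, ?_⟩
  · rw [Matrix.nonsing_inv_nonsing_inv _ hwdet]
    exact hww
  · rintro h ⟨hh, heq⟩
    have hhmat : Aux.MatInU n (h - 1) := fun i j => hh i j
    obtain ⟨hhu, -, -⟩ := Aux.key hn1 hhmat
    have hhdet : IsUnit h.det := (Matrix.isUnit_iff_isUnit_det h).mp hhu
    have h2 : h⁻¹ * x = w * x := heq.symm.trans hww
    have h3 : h⁻¹ = w := by
      have := congrArg (· * x⁻¹) h2
      simpa [Matrix.mul_assoc, hxx] using this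
    rw [← h3, Matrix.nonsing_inv_nonsing_inv _ hhdet]

end
end

section
/- Let A be a commutative ring, d ≥ 1, and let φ : A((u)) → A((u)) be a ring endomorphism for which there exist a real number λ > 1 and an integer N ≥ 0 with φ(u^k·A[[u]]) ⊆ u^{⌊λk⌋}·A[[u]] for all integers k > N. Let m ≥ 0 and let n be an integer with n > N and (λ−1)·n > 2m+1. Then for every h ∈ U_n and every x ∈ V_m there exists a unique g ∈ U_n such that g^{-1}·x·φ(g) = h^{-1}·x, where φ is applied to matrices entrywise. -/
noncomputable section

namespace LeftTwistAux

open HahnSeries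

variable {A : Type*} [CommRing A]

theorem uvar_pow (n : ℕ) : uvar A ^ n = HahnSeries.single (n : ℤ) (1 : A) := by
  rw [uvar, single_pow, one_pow, nsmul_eq_mul, mul_one]

theorem coeff_ofPS_neg (c : PowerSeries A) {t : ℤ} (ht : t < 0) :
    (HahnSeries.ofPowerSeries ℤ A c).coeff t = 0 := by
  rw [ofPowerSeries_apply]
  apply embDomain_notin_range
  rintro ⟨k, hk⟩
  simp only [Nat.castOrderEmbedding_apply] at hk
  omega

theorem coeff_single_mul (s t : ℤ) (y : LaurentSeries A) :
    ((HahnSeries.single s (1 : A)) * y).coeff t = y.coeff (t - s) := by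
  have h := coeff_single_mul_add (r := (1 : A)) (x := y) (a := t - s) (b := s)
  rw [sub_add_cancel] at h
  rw [h, one_mul]

/-- All coefficients below `s` vanish. -/
def Lo (s : ℤ) (f : LaurentSeries A) : Prop := ∀ t : ℤ, t < s → f.coeff t = 0

theorem lo_iff {s : ℤ} {f : LaurentSeries A} :
    Lo s f ↔ ∃ c : PowerSeries A,
      f = HahnSeries.single s (1 : A) * HahnSeries.ofPowerSeries ℤ A c := by
  constructor
  · intro hf
    refine ⟨PowerSeries.mk fun k => f.coeff (s + k), ?_⟩
    apply HahnSeries.ext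
    funext t
    rw [coeff_single_mul]
    rcases lt_or_ge t s with h | h
    · rw [hf t h, coeff_ofPS_neg _ (by omega)]
    · obtain ⟨k, hk⟩ := Int.eq_ofNat_of_zero_le (sub_nonneg.mpr h)
      rw [hk, ofPowerSeries_apply_coeff, PowerSeries.coeff_mk]
      congr 1
      omega
  · rintro ⟨c, rfl⟩ t ht
    rw [coeff_single_mul]
    exact coeff_ofPS_neg _ (by omega)

theorem Lo.mono {s s' : ℤ} (hs : s' ≤ s) {f : LaurentSeries A} (hf : Lo s f) : Lo s' f :=
  fun t ht => hf t (lt_of_lt_of_le ht hs)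

theorem lo_zero (s : ℤ) : Lo s (0 : LaurentSeries A) := fun t _ => rfl

theorem Lo.add {s : ℤ} {f g : LaurentSeries A} (hf : Lo s f) (hg : Lo s g) :
    Lo s (f + g) := fun t ht => by
  rw [HahnSeries.coeff_add, hf t ht, hg t ht, add_zero]

theorem Lo.sub {s : ℤ} {f g : LaurentSeries A} (hf : Lo s f) (hg : Lo s g) :
    Lo s (f - g) := fun t ht => by
  rw [HahnSeries.coeff_sub, hf t ht, hg t ht, sub_zero]

theorem Lo.mul {s u : ℤ} {f g : LaurentSeries A} (hf : Lo s f) (hg : Lo u g) :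
    Lo (s + u) (f * g) := by
  obtain ⟨c, rfl⟩ := lo_iff.mp hf
  obtain ⟨e, rfl⟩ := lo_iff.mp hg
  refine lo_iff.mpr ⟨c * e, ?_⟩
  rw [map_mul, mul_mul_mul_comm, single_mul_single, mul_one]

theorem lo_sum {s : ℤ} {ι : Type*} (t : Finset ι) (f : ι → LaurentSeries A)
    (h : ∀ i ∈ t, Lo s (f i)) : Lo s (∑ i ∈ t, f i) := by
  classical
  induction t using Finset.induction_on with
  | empty => simpa using lo_zero s
  | insert _ _ hnotmem ih =>
    rw [Finset.sum_insert hnotmem]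
    exact Lo.add (h _ (Finset.mem_insert_self _ _))
      (ih fun i hi => h i (Finset.mem_insert_of_mem hi))

theorem lo_one : Lo (0 : ℤ) (1 : LaurentSeries A) := by
  intro t ht
  rw [← map_one (HahnSeries.ofPowerSeries ℤ A)]
  exact coeff_ofPS_neg _ ht

variable {d : ℕ}

/-- Matrix version of `Lo`. -/
def MLo (s : ℤ) (a : Matrix (Fin d) (Fin d) (LaurentSeries A)) : Prop :=
  ∀ i j, Lo s (a i j)

theorem MLo.mono {s s' : ℤ} (hs : s' ≤ s) {a : Matrix (Fin d) (Fin d) (LaurentSeries A)}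
    (ha : MLo s a) : MLo s' a := fun i j => (ha i j).mono hs

theorem MLo.add {s : ℤ} {a b : Matrix (Fin d) (Fin d) (LaurentSeries A)}
    (ha : MLo s a) (hb : MLo s b) : MLo s (a + b) := fun i j => by
  have := (ha i j).add (hb i j)
  simpa [Matrix.add_apply] using this

theorem MLo.subm {s : ℤ} {a b : Matrix (Fin d) (Fin d) (LaurentSeries A)}
    (ha : MLo s a) (hb : MLo s b) : MLo s (a - b) := fun i j => by
  have := (ha i j).sub (hb i j)
  simpa [Matrix.sub_apply] using this

theorem MLo.mulm {s u : ℤ} {a b : Matrix (Fin d) (Fin d) (LaurentSeries A)}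
    (ha : MLo s a) (hb : MLo u b) : MLo (s + u) (a * b) := fun i j => by
  rw [Matrix.mul_apply]
  exact lo_sum _ _ fun k _ => (ha i k).mul (hb k j)

theorem mlo_one : MLo (0 : ℤ) (1 : Matrix (Fin d) (Fin d) (LaurentSeries A)) := by
  intro i j
  rw [Matrix.one_apply]
  split_ifs
  · exact lo_one
  · exact lo_zero 0

theorem mlo_zero (s : ℤ) : MLo s (0 : Matrix (Fin d) (Fin d) (LaurentSeries A)) :=
  fun _ _ => lo_zero s

theorem memUn_iff {n : ℕ} {g : Matrix (Fin d) (Fin d) (LaurentSeries A)} :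
    MemUn n g ↔ MLo (n : ℤ) (g - 1) := by
  constructor
  · intro hg i j
    obtain ⟨c, hc⟩ := hg i j
    rw [uvar_pow] at hc
    exact lo_iff.mpr ⟨c, hc⟩
  · intro hg i j
    obtain ⟨c, hc⟩ := lo_iff.mp (hg i j)
    exact ⟨c, by rw [uvar_pow]; exact hc⟩

/-- Elements of `U_n` (with `n ≥ 1`) are invertible matrices. -/
theorem isUnit_of_memUn {n : ℕ} (hn : 1 ≤ n) {g : Matrix (Fin d) (Fin d) (LaurentSeries A)}
    (hg : MemUn n g) : IsUnit g := by
  choose c hc using hg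
  set G : Matrix (Fin d) (Fin d) (PowerSeries A) :=
    Matrix.of fun i j =>
      (1 : Matrix (Fin d) (Fin d) (PowerSeries A)) i j + PowerSeries.X ^ n * c i j with hG
  have hmap : G.map (HahnSeries.ofPowerSeries ℤ A) = g := by
    refine Matrix.ext fun i j => ?_
    have h1 : g i j = (1 : Matrix (Fin d) (Fin d) (LaurentSeries A)) i j +
        uvar A ^ n * HahnSeries.ofPowerSeries ℤ A (c i j) := by
      have h2 := hc i j
      rw [Matrix.sub_apply] at h2
      linear_combination h2
    rw [h1, Matrix.map_apply, hG]
    simp only [Matrix.of_apply, map_add, map_mul, map_pow]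
    congr 1
    · rw [Matrix.one_apply, Matrix.one_apply]
      split_ifs
      · exact map_one _
      · exact map_zero _
    · congr 1
      rw [HahnSeries.ofPowerSeries_X, uvar]
  have hdetG : IsUnit ((HahnSeries.ofPowerSeries ℤ A) G.det) := by
    apply IsUnit.map
    rw [PowerSeries.isUnit_iff_constantCoeff]
    have h2 : (PowerSeries.constantCoeff (R := A)) G.det =
        (G.map (PowerSeries.constantCoeff (R := A))).det := by
      rw [← RingHom.mapMatrix_apply, ← RingHom.map_det]
    have h3 : G.map (PowerSeries.constantCoeff (R := A)) = 1 := by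
      refine Matrix.ext fun i j => ?_
      rw [Matrix.map_apply, hG]
      simp only [Matrix.of_apply, map_add, map_mul, map_pow, PowerSeries.constantCoeff_X,
        zero_pow (by omega : n ≠ 0), zero_mul, add_zero]
      rw [Matrix.one_apply, Matrix.one_apply]
      split_ifs
      · exact map_one _
      · exact map_zero _
    rw [h2, h3, Matrix.det_one]
    exact isUnit_one
  refine (Matrix.isUnit_iff_isUnit_det g).mpr ?_
  rw [← hmap, ← RingHom.mapMatrix_apply, ← RingHom.map_det]
  exact hdetG

theorem lo_of_shift {m : ℕ} {f : LaurentSeries A} {c : PowerSeries A}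
    (hc : uvar A ^ m * f = HahnSeries.ofPowerSeries ℤ A c) : Lo (-(m : ℤ)) f := by
  refine lo_iff.mpr ⟨c, ?_⟩
  have h1 := congrArg (fun z => HahnSeries.single (-(m : ℤ)) (1 : A) * z) hc
  rw [uvar_pow, ← mul_assoc, single_mul_single] at h1
  simpa using h1

theorem lo_phi (φ : LaurentSeries A →+* LaurentSeries A) (lam : ℝ) (N : ℕ)
    (hφ : ∀ k : ℕ, N < k → ∀ f : PowerSeries A,
      ∃ g : PowerSeries A,
        φ (uvar A ^ k * HahnSeries.ofPowerSeries ℤ A f) =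
          uvar A ^ ⌊lam * (k : ℝ)⌋₊ * HahnSeries.ofPowerSeries ℤ A g)
    {k : ℕ} (hk : N < k) {f : LaurentSeries A} (hf : Lo (k : ℤ) f) :
    Lo ((⌊lam * (k : ℝ)⌋₊ : ℤ)) (φ f) := by
  obtain ⟨c, rfl⟩ := lo_iff.mp hf
  obtain ⟨e, he⟩ := hφ k hk c
  rw [← uvar_pow, he, uvar_pow]
  exact lo_iff.mpr ⟨e, rfl⟩

end LeftTwistAux

/-- part (2) of Lemma 2.4.2 of the paper.
Let `φ : A((u)) → A((u))` be locally contracting of factor `λ > 1` beyond `N`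
(i.e. `φ(u^k·A[[u]]) ⊆ u^{⌊λk⌋}·A[[u]]` for `k > N`).  If `n > N` and `(λ−1)·n > 2m+1`,
then for every `h ∈ U_n` and `x ∈ V_m` there is a unique `g ∈ U_n` with
`g⁻¹·x·φ(g) = h⁻¹·x`. -/
theorem exists_unique_left_twist
    {A : Type*} [CommRing A] {d : ℕ} (hd : 1 ≤ d)
    (φ : LaurentSeries A →+* LaurentSeries A)
    (lam : ℝ) (hlam : 1 < lam) (N : ℕ)
    (hφ : ∀ k : ℕ, N < k → ∀ f : PowerSeries A,
      ∃ g : PowerSeries A,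
        φ (uvar A ^ k * HahnSeries.ofPowerSeries ℤ A f) =
          uvar A ^ ⌊lam * (k : ℝ)⌋₊ * HahnSeries.ofPowerSeries ℤ A g)
    (m n : ℕ) (hnN : N < n) (hn : (2 * (m : ℝ) + 1) < (lam - 1) * (n : ℝ))
    (h : Matrix (Fin d) (Fin d) (LaurentSeries A)) (hh : MemUn n h)
    (x : Matrix (Fin d) (Fin d) (LaurentSeries A)) (hx : MemVm m x) :
    ∃! g : Matrix (Fin d) (Fin d) (LaurentSeries A),
      MemUn n g ∧ g⁻¹ * x * g.map ⇑φ = h⁻¹ * x := by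
  classical
  open LeftTwistAux HahnSeries in
  have hn1 : 1 ≤ n := by omega
  obtain ⟨hxu, hxU, hxiU⟩ := hx
  have hxdet : IsUnit x.det := (Matrix.isUnit_iff_isUnit_det x).mp hxu
  have hxx : x * x⁻¹ = 1 := Matrix.mul_nonsing_inv x hxdet
  have hx'x : x⁻¹ * x = 1 := Matrix.nonsing_inv_mul x hxdet
  have hhu : IsUnit h := LeftTwistAux.isUnit_of_memUn hn1 hh
  have hhdet : IsUnit h.det := (Matrix.isUnit_iff_isUnit_det h).mp hhu
  have hhh : h * h⁻¹ = 1 := Matrix.mul_nonsing_inv h hhdet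
  have h'h : h⁻¹ * h = 1 := Matrix.nonsing_inv_mul h hhdet
  -- low-order vanishing facts
  have mh : LeftTwistAux.MLo (n : ℤ) (h - 1) := LeftTwistAux.memUn_iff.mp hh
  have mh0 : LeftTwistAux.MLo (0 : ℤ) h := by
    have h0 := (mh.mono (by exact_mod_cast Nat.zero_le n)).add LeftTwistAux.mlo_one
    simpa using h0
  have mx : LeftTwistAux.MLo (-(m : ℤ)) x := fun i j =>
    LeftTwistAux.lo_of_shift (hxU i j).choose_spec
  have mxi : LeftTwistAux.MLo (-(m : ℤ)) x⁻¹ := fun i j =>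
    LeftTwistAux.lo_of_shift (hxiU i j).choose_spec
  -- numeric key inequality
  have key : ∀ k : ℕ, n ≤ k →
      ((k : ℤ) + 1) ≤ -(m : ℤ) + (⌊lam * (k : ℝ)⌋₊ : ℤ) + -(m : ℤ) + 0 := by
    intro k hk
    have h2 : (lam - 1) * (n : ℝ) ≤ (lam - 1) * (k : ℝ) := by
      apply mul_le_mul_of_nonneg_left _ (by linarith)
      exact_mod_cast hk
    have h3 : (k + 2 * m + 1 : ℕ) ≤ ⌊lam * (k : ℝ)⌋₊ := by
      apply Nat.le_floor
      push_cast
      nlinarith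
    have h4 : ((k + 2 * m + 1 : ℕ) : ℤ) ≤ (⌊lam * (k : ℝ)⌋₊ : ℤ) := by exact_mod_cast h3
    push_cast at h4
    omega
  -- the iteration map
  set F : Matrix (Fin d) (Fin d) (LaurentSeries A) → Matrix (Fin d) (Fin d) (LaurentSeries A) :=
    fun g => x * g.map ⇑φ * x⁻¹ * h with hF
  have map_sub' : ∀ a b : Matrix (Fin d) (Fin d) (LaurentSeries A),
      (a - b).map ⇑φ = a.map ⇑φ - b.map ⇑φ := by
    intro a b
    refine Matrix.ext fun i j => ?_
    simp [Matrix.map_apply, Matrix.sub_apply, map_sub]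
  have map_one' : (1 : Matrix (Fin d) (Fin d) (LaurentSeries A)).map ⇑φ = 1 := by
    refine Matrix.ext fun i j => ?_
    rw [Matrix.map_apply, Matrix.one_apply]
    split_ifs
    · exact map_one φ
    · exact map_zero φ
  have mmapφ : ∀ k : ℕ, N < k → ∀ a : Matrix (Fin d) (Fin d) (LaurentSeries A),
      LeftTwistAux.MLo (k : ℤ) a →
        LeftTwistAux.MLo ((⌊lam * (k : ℝ)⌋₊ : ℤ)) (a.map ⇑φ) := by
    intro k hk a ha i j
    exact LeftTwistAux.lo_phi φ lam N hφ hk (ha i j)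
  -- the contraction step
  have step : ∀ k : ℕ, n ≤ k → ∀ g₁ g₂ : Matrix (Fin d) (Fin d) (LaurentSeries A),
      LeftTwistAux.MLo (k : ℤ) (g₁ - g₂) →
        LeftTwistAux.MLo ((k : ℤ) + 1) (F g₁ - F g₂) := by
    intro k hk g₁ g₂ hdiff12
    have e : F g₁ - F g₂ = x * ((g₁ - g₂).map ⇑φ) * x⁻¹ * h := by
      simp only [hF]
      rw [map_sub', mul_sub, sub_mul, sub_mul]
    rw [e]
    have h5 := ((mx.mulm (mmapφ k (lt_of_lt_of_le hnN hk) _ hdiff12)).mulm mxi).mulm mh0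
    exact h5.mono (key k hk)
  -- F preserves U_n
  have stable : ∀ g, MemUn n g → MemUn n (F g) := by
    intro g hg
    rw [LeftTwistAux.memUn_iff]
    have e1 : x * ((g - 1).map ⇑φ) * x⁻¹ * h = x * g.map ⇑φ * x⁻¹ * h - h := by
      rw [map_sub', map_one', mul_sub, mul_one, sub_mul, sub_mul, hxx, one_mul]
    have e : F g - 1 = x * ((g - 1).map ⇑φ) * x⁻¹ * h + (h - 1) := by
      simp only [hF]
      rw [e1]
      abel
    rw [e]
    refine LeftTwistAux.MLo.add (LeftTwistAux.MLo.mono ?_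
      (((mx.mulm (mmapφ n hnN _ (LeftTwistAux.memUn_iff.mp hg))).mulm mxi).mulm mh0)) mh
    have := key n le_rfl
    omega
  -- the approximating sequence
  set seq : ℕ → Matrix (Fin d) (Fin d) (LaurentSeries A) := fun j => F^[j] 1 with hseq
  have seq_zero : seq 0 = 1 := rfl
  have seq_succ : ∀ j, seq (j + 1) = F (seq j) := fun j => Function.iterate_succ_apply' F j 1
  have hseqU : ∀ j, MemUn n (seq j) := by
    intro j
    induction j with
    | zero =>
      rw [seq_zero]
      intro i j
      exact ⟨0, by simp⟩
    | succ j ih =>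
      rw [seq_succ]
      exact stable _ ih
  have hseq0 : ∀ j, LeftTwistAux.MLo (0 : ℤ) (seq j) := by
    intro j
    have h0 := ((LeftTwistAux.memUn_iff.mp (hseqU j)).mono
      (by exact_mod_cast Nat.zero_le n)).add LeftTwistAux.mlo_one
    simpa using h0
  have hdiffseq : ∀ j : ℕ, LeftTwistAux.MLo ((n + j : ℕ) : ℤ) (seq (j + 1) - seq j) := by
    intro j
    induction j with
    | zero =>
      have h0 : LeftTwistAux.MLo (n : ℤ) (seq 1 - seq 0) := by
        rw [seq_succ, seq_zero]
        simpa using LeftTwistAux.memUn_iff.mp (stable 1 (hseqU 0))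
      simpa using h0
    | succ j ih =>
      have h7 := step (n + j) (by omega) (seq (j + 1)) (seq j) ih
      rw [← seq_succ, ← seq_succ] at h7
      exact h7.mono (by push_cast; omega)
  have htel : ∀ j j' : ℕ, j ≤ j' → LeftTwistAux.MLo ((n + j : ℕ) : ℤ) (seq j' - seq j) := by
    intro j j' hjj'
    induction j', hjj' using Nat.le_induction with
    | base =>
      rw [sub_self]
      exact LeftTwistAux.mlo_zero _
    | succ j' hj ih =>
      have e : seq (j' + 1) - seq j = (seq (j' + 1) - seq j') + (seq j' - seq j) := by abel
      rw [e]
      exact ((hdiffseq j').mono (by push_cast; omega)).add ih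
  have hstab : ∀ (i j : Fin d) (t : ℤ) (j₁ j₂ : ℕ), t < (n : ℤ) + j₁ → j₁ ≤ j₂ →
      (seq j₂ i j).coeff t = (seq j₁ i j).coeff t := by
    intro i j t j₁ j₂ ht hle
    have h0 := htel j₁ j₂ hle i j t (by push_cast; omega)
    rw [Matrix.sub_apply, HahnSeries.coeff_sub] at h0
    exact sub_eq_zero.mp h0
  -- the limit matrix
  set glim : Matrix (Fin d) (Fin d) (LaurentSeries A) :=
    Matrix.of fun i j => HahnSeries.ofPowerSeries ℤ A
      (PowerSeries.mk fun s => (seq (s + 1) i j).coeff (s : ℤ)) with hglimdef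
  have hglimcoeff : ∀ (i j : Fin d) (s : ℕ),
      (glim i j).coeff (s : ℤ) = (seq (s + 1) i j).coeff (s : ℤ) := by
    intro i j s
    rw [hglimdef]
    simp [Matrix.of_apply, HahnSeries.ofPowerSeries_apply_coeff, PowerSeries.coeff_mk]
  have hglimneg : ∀ (i j : Fin d) (t : ℤ), t < 0 → (glim i j).coeff t = 0 := by
    intro i j t ht
    rw [hglimdef]
    exact LeftTwistAux.coeff_ofPS_neg _ ht
  have hglim : ∀ j₀ : ℕ, LeftTwistAux.MLo ((n + j₀ : ℕ) : ℤ) (glim - seq j₀) := by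
    intro j₀ i j t ht
    rw [Matrix.sub_apply, HahnSeries.coeff_sub]
    rcases lt_or_ge t 0 with h0 | h0
    · rw [hglimneg i j t h0, hseq0 j₀ i j t h0, sub_zero]
    · obtain ⟨s, rfl⟩ := Int.eq_ofNat_of_zero_le h0
      push_cast at ht
      rw [hglimcoeff]
      rcases le_total (s + 1) j₀ with hc | hc
      · rw [hstab i j (s : ℤ) (s + 1) j₀ (by push_cast; omega) hc, sub_self]
      · rw [hstab i j (s : ℤ) j₀ (s + 1) (by push_cast; omega) hc, sub_self]
  -- glim is a fixed point of F
  have hfixz : ∀ (i j : Fin d) (t : ℤ), ((glim - F glim) i j).coeff t = 0 := by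
    intro i j t
    set j₀ : ℕ := t.toNat + 1 with hj₀
    have h1 := hglim (j₀ + 1)
    have h2 := step (n + j₀) (by omega) glim (seq j₀) (hglim j₀)
    rw [← seq_succ] at h2
    have e : glim - F glim = (glim - seq (j₀ + 1)) - (F glim - seq (j₀ + 1)) := by abel
    rw [e, Matrix.sub_apply, HahnSeries.coeff_sub,
      h1 i j t (by push_cast; omega), h2 i j t (by push_cast; omega), sub_zero]
  have hfix : F glim = glim := by
    have hz : glim - F glim = 0 := by
      refine Matrix.ext fun i j => ?_
      rw [Matrix.zero_apply]
      apply HahnSeries.ext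
      funext t
      rw [hfixz i j t]
      rfl
    exact (sub_eq_zero.mp hz).symm
  have hgU : MemUn n glim := by
    rw [LeftTwistAux.memUn_iff]
    have h0 := hglim 0
    rw [seq_zero] at h0
    simpa using h0
  have hgu : IsUnit glim := LeftTwistAux.isUnit_of_memUn hn1 hgU
  have hgdet : IsUnit glim.det := (Matrix.isUnit_iff_isUnit_det glim).mp hgu
  have hg'g : glim⁻¹ * glim = 1 := Matrix.nonsing_inv_mul glim hgdet
  -- the equation for glim
  have hfixeq : x * glim.map ⇑φ * x⁻¹ * h = glim := by
    have h0 := hfix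
    simp only [hF] at h0
    exact h0
  have e2 : x * glim.map ⇑φ * x⁻¹ = glim * h⁻¹ := by
    calc x * glim.map ⇑φ * x⁻¹ = x * glim.map ⇑φ * x⁻¹ * (h * h⁻¹) := by rw [hhh, mul_one]
      _ = (x * glim.map ⇑φ * x⁻¹ * h) * h⁻¹ := by rw [← mul_assoc]
      _ = glim * h⁻¹ := by rw [hfixeq]
  have e3 : x * glim.map ⇑φ = glim * h⁻¹ * x := by
    calc x * glim.map ⇑φ = x * glim.map ⇑φ * (x⁻¹ * x) := by rw [hx'x, mul_one]
      _ = (x * glim.map ⇑φ * x⁻¹) * x := by rw [← mul_assoc]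
      _ = glim * h⁻¹ * x := by rw [e2]
  have geq : glim⁻¹ * x * glim.map ⇑φ = h⁻¹ * x := by
    calc glim⁻¹ * x * glim.map ⇑φ = glim⁻¹ * (x * glim.map ⇑φ) := by rw [mul_assoc]
      _ = glim⁻¹ * (glim * (h⁻¹ * x)) := by rw [e3, mul_assoc]
      _ = (glim⁻¹ * glim) * (h⁻¹ * x) := by rw [← mul_assoc]
      _ = h⁻¹ * x := by rw [hg'g, one_mul]
  refine ⟨glim, ⟨hgU, geq⟩, ?_⟩
  -- uniqueness
  rintro g' ⟨hg'U, hg'eq⟩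
  have hg'u : IsUnit g' := LeftTwistAux.isUnit_of_memUn hn1 hg'U
  have hg'det : IsUnit g'.det := (Matrix.isUnit_iff_isUnit_det g').mp hg'u
  have hgg' : g' * g'⁻¹ = 1 := Matrix.mul_nonsing_inv g' hg'det
  have e4 : x * g'.map ⇑φ = g' * (h⁻¹ * x) := by
    calc x * g'.map ⇑φ = (g' * g'⁻¹) * (x * g'.map ⇑φ) := by rw [hgg', one_mul]
      _ = g' * (g'⁻¹ * x * g'.map ⇑φ) := by simp only [mul_assoc]
      _ = g' * (h⁻¹ * x) := by rw [hg'eq]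
  have e5 : F g' = g' := by
    simp only [hF]
    calc x * g'.map ⇑φ * x⁻¹ * h = g' * (h⁻¹ * x) * x⁻¹ * h := by rw [e4]
      _ = g' * (h⁻¹ * (x * x⁻¹) * h) := by simp only [mul_assoc]
      _ = g' := by rw [hxx, mul_one, h'h, mul_one]
  have hind : ∀ k : ℕ, LeftTwistAux.MLo ((n + k : ℕ) : ℤ) (g' - glim) := by
    intro k
    induction k with
    | zero =>
      have e6 : g' - glim = (g' - 1) - (glim - 1) := by abel
      have h0 : LeftTwistAux.MLo (n : ℤ) (g' - glim) := by
        rw [e6]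
        exact (LeftTwistAux.memUn_iff.mp hg'U).subm (LeftTwistAux.memUn_iff.mp hgU)
      simpa using h0
    | succ k ih =>
      have h7 := step (n + k) (by omega) g' glim ih
      rw [e5, hfix] at h7
      exact h7.mono (by push_cast; omega)
  have hz : g' - glim = 0 := by
    refine Matrix.ext fun i j => ?_
    rw [Matrix.zero_apply]
    apply HahnSeries.ext
    funext t
    rw [hind t.toNat i j t (by push_cast; omega)]
    rfl
  exact sub_eq_zero.mp hz

end
end

section
/- Let A be a commutative ring, d ≥ 1, and let φ : A((u)) → A((u)) be a ring endomorphism for which there exist a real number λ > 1 and an integer N ≥ 0 with φ(u^k·A[[u]]) ⊆ u^{⌊λk⌋}·A[[u]] for all integers k > N. Then for every integer n > N and every d×d matrix g over A((u)) with g − 1 ∈ u^n·M_d(A[[u]]), one has φ(g) − 1 ∈ u^{⌊λn⌋}·M_d(A[[u]]) (φ applied entrywise); in particular all entries of φ(g) lie in A[[u]] and φ(g) is invertible as a matrix over A[[u]]. -/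
noncomputable section

/-- first Lemma of Section 3.3 of the paper.
Let `φ : A((u)) → A((u))` satisfy `φ(u^k·A[[u]]) ⊆ u^{⌊λk⌋}·A[[u]]` for all `k > N`, where
`λ > 1`.  Then for every `n > N` and every `d×d` matrix `g` with `g − 1 ∈ uⁿ·M_d(A[[u]])`,
one has `φ(g) − 1 ∈ u^{⌊λn⌋}·M_d(A[[u]])`; in particular all entries of `φ(g)` lie in
`A[[u]]` and `φ(g)` is invertible as a matrix over `A[[u]]`. -/
theorem map_congruence_subgroup_mem_plus
    {A : Type*} [CommRing A] {d : ℕ}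
    (φ : LaurentSeries A →+* LaurentSeries A)
    (lam : ℝ) (hlam : 1 < lam) (N : ℕ)
    (hφ : ∀ k : ℕ, N < k → ∀ f : PowerSeries A,
      ∃ g : PowerSeries A,
        φ (uvar A ^ k * HahnSeries.ofPowerSeries ℤ A f) =
          uvar A ^ ⌊lam * (k : ℝ)⌋₊ * HahnSeries.ofPowerSeries ℤ A g)
    (n : ℕ) (hn : N < n)
    (g : Matrix (Fin d) (Fin d) (LaurentSeries A))
    (hg : ∀ i j, ∃ c : PowerSeries A,
      (g - 1) i j = uvar A ^ n * HahnSeries.ofPowerSeries ℤ A c) :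
    (∀ i j, ∃ c : PowerSeries A,
      (g.map ⇑φ - 1) i j = uvar A ^ ⌊lam * (n : ℝ)⌋₊ * HahnSeries.ofPowerSeries ℤ A c) ∧
    (∀ i j, ∃ c : PowerSeries A, (g.map ⇑φ) i j = HahnSeries.ofPowerSeries ℤ A c) ∧
    (∃ h : Matrix (Fin d) (Fin d) (PowerSeries A),
      g.map ⇑φ * h.map (fun c => HahnSeries.ofPowerSeries ℤ A c) = 1 ∧
      h.map (fun c => HahnSeries.ofPowerSeries ℤ A c) * g.map ⇑φ = 1) := by
  set of : PowerSeries A →+* LaurentSeries A := HahnSeries.ofPowerSeries ℤ A with hof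
  set m : ℕ := ⌊lam * (n : ℝ)⌋₊ with hm
  have hm1 : m ≠ 0 := by
    have h1 : (1 : ℝ) ≤ lam * n := by
      have : (1 : ℝ) ≤ (n : ℝ) := by exact_mod_cast Nat.one_le_iff_ne_zero.2 (by omega)
      nlinarith
    have : 1 ≤ m := Nat.le_floor (by exact_mod_cast h1)
    omega
  choose c hc using hg
  choose ψ hψ using hφ n hn
  have hofX : of PowerSeries.X = uvar A := HahnSeries.ofPowerSeries_X
  have hone : ∀ i j, φ ((1 : Matrix (Fin d) (Fin d) (LaurentSeries A)) i j)
      = (1 : Matrix (Fin d) (Fin d) (LaurentSeries A)) i j := by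
    intro i j
    by_cases h : i = j <;> simp [Matrix.one_apply, h]
  have key : ∀ i j, (g.map ⇑φ - 1) i j = uvar A ^ m * of (ψ (c i j)) := by
    intro i j
    have : (g.map ⇑φ - 1) i j = φ ((g - 1) i j) := by
      simp only [Matrix.sub_apply, Matrix.map_apply, map_sub, hone]
    rw [this, hc i j, hψ]
  refine ⟨fun i j => ⟨ψ (c i j), key i j⟩, ?_, ?_⟩
  · intro i j
    refine ⟨(1 : Matrix (Fin d) (Fin d) (PowerSeries A)) i j + PowerSeries.X ^ m * ψ (c i j), ?_⟩
    have : (g.map ⇑φ) i j = (g.map ⇑φ - 1) i j + (1 : Matrix (Fin d) (Fin d) (LaurentSeries A)) i j := by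
      ring_nf
      simp [Matrix.sub_apply]
    rw [this, key i j, map_add, map_mul, map_pow, hofX]
    by_cases h : i = j <;> simp [Matrix.one_apply, h] <;> ring
  · set D : Matrix (Fin d) (Fin d) (PowerSeries A) :=
      1 + Matrix.of (fun i j => PowerSeries.X ^ m * ψ (c i j)) with hD
    have hmap : g.map ⇑φ = D.map (fun x => of x) := by
      ext i j
      have h1 : (g.map ⇑φ) i j = (g.map ⇑φ - 1) i j + (1 : Matrix (Fin d) (Fin d) (LaurentSeries A)) i j := by
        ring_nf
        simp [Matrix.sub_apply]
      rw [h1, key i j]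
      simp only [hD, Matrix.map_apply, Matrix.add_apply, Matrix.of_apply, map_add, map_mul,
        map_pow, hofX]
      by_cases h : i = j <;> simp [Matrix.one_apply, h] <;> ring
    have hdet : IsUnit D.det := by
      rw [PowerSeries.isUnit_iff_constantCoeff]
      have : (PowerSeries.constantCoeff : PowerSeries A →+* A) D.det = (D.map (PowerSeries.constantCoeff : PowerSeries A →+* A)).det :=
        RingHom.map_det _ _
      have hD1 : D.map (PowerSeries.constantCoeff : PowerSeries A →+* A) = 1 := by
        ext i j
        simp only [hD, Matrix.map_apply, Matrix.add_apply, Matrix.of_apply, map_add, map_mul,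
          map_pow, PowerSeries.constantCoeff_X, zero_pow hm1, zero_mul, add_zero]
        by_cases h : i = j <;> simp [Matrix.one_apply, h]
      rw [this, hD1, Matrix.det_one]
      exact isUnit_one
    refine ⟨D⁻¹, ?_, ?_⟩
    · rw [hmap, ← Matrix.map_mul, Matrix.mul_nonsing_inv D hdet, Matrix.map_one _ (map_zero of) (map_one of)]
    · rw [hmap, ← Matrix.map_mul, Matrix.nonsing_inv_mul D hdet, Matrix.map_one _ (map_zero of) (map_one of)]

end
end
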